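/- arXiv:2311.10124 — 2 statements merged into one kernel-verified Lean document; each statement's English description precedes it below -/
import Mathlib

section
/- Let m be a positive integer and let ρ be a complex number. Then the Eulerian polynomial satisfies A_m(ρ) = Σ_{n=1}^{m} (n!/C(m,n)) · B_n^m(ρ) · S₂(m,n), where B_n^m(ρ) = C(m,n) ρ^n (1−ρ)^{m−n} is the Bernstein basis function. -/
open Finset Nat

/-- The Eulerian numbers `A_{n,j} = Σ_{v=0}^j (−1)^v C(n+1,v) (j−v)^n`. -/
noncomputable def eulerianNumber (n j : ℕ) : ℂ :=
  ∑ v ∈ Finset.range (j + 1), (-1 : ℂ) ^ v * ((n + 1).choose v : ℂ) * ((j : ℂ) - v) ^ n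

/-- The Eulerian polynomials `A_n(ρ) = Σ_{j=0}^n A_{n,j} ρ^j`. -/
noncomputable def eulerianPoly (n : ℕ) (ρ : ℂ) : ℂ :=
  ∑ j ∈ Finset.range (n + 1), eulerianNumber n j * ρ ^ j

/-- The Bernstein basis functions `B_d^k(ω) = C(k,d) ω^d (1−ω)^{k−d}` for `0 ≤ d ≤ k`,
and `0` otherwise. -/
noncomputable def bernsteinC (k d : ℕ) (ω : ℂ) : ℂ :=
  if d ≤ k then (k.choose d : ℂ) * ω ^ d * (1 - ω) ^ (k - d) else 0

/-- The Stirling numbers of the second kind `S₂(n,c)`, defined by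
`(e^t - 1)^c = Σ_{n≥0} c! S₂(n,c) t^n / n!`. -/
noncomputable def stirling2 (n c : ℕ) : ℂ :=
  ((n ! : ℂ) / (c ! : ℂ)) * PowerSeries.coeff n ((PowerSeries.exp ℂ - 1) ^ c)

-- triangular swap lemma
lemma tri {M : Type*} [AddCommMonoid M] (f : ℕ → ℕ → M) (N : ℕ) :
    ∑ j ∈ range (N+1), ∑ v ∈ range (j+1), f v (j - v)
      = ∑ v ∈ range (N+1), ∑ w ∈ range (N - v + 1), f v w := by
  induction N with
  | zero => simp
  | succ N ih =>
    rw [sum_range_succ, ih, sum_range_succ (fun v => ∑ w ∈ range (N + 1 - v + 1), f v w) (N+1)]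
    have h1 : ∀ v ∈ range (N+1), ∑ w ∈ range (N + 1 - v + 1), f v w
        = (∑ w ∈ range (N - v + 1), f v w) + f v (N + 1 - v) := by
      intro v hv
      rw [mem_range] at hv
      have h : N + 1 - v = (N - v) + 1 := by omega
      rw [h, sum_range_succ, ← h]
    rw [sum_congr rfl h1, sum_add_distrib, sum_range_succ (fun v => f v (N+1-v)) (N+1)]
    simp [add_assoc]

lemma tele (ρ : ℂ) (r u : ℕ) :
    ρ * (∑ w ∈ range (r+1), (-1:ℂ)^w * ((u+w).choose u : ℂ) * ρ^w * (1-ρ)^(r-w))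
      + (∑ w ∈ range (r+1), (-1:ℂ)^w * ((u+w).choose (u+1) : ℂ) * ρ^w * (1-ρ)^(r-w))
    = (-1:ℂ)^r * ((u+r+1).choose (u+1) : ℂ) * ρ^(r+1) := by
  have key : ∀ w ∈ range (r+1),
      ρ * ((-1:ℂ)^w * ((u+w).choose u : ℂ) * ρ^w * (1-ρ)^(r-w))
        + ((-1:ℂ)^w * ((u+w).choose (u+1) : ℂ) * ρ^w * (1-ρ)^(r-w))
      = (fun w => (-1:ℂ)^w * ((u+w).choose (u+1) : ℂ) * ρ^w * (1-ρ)^(r+1-w)) w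
        - (fun w => (-1:ℂ)^w * ((u+w).choose (u+1) : ℂ) * ρ^w * (1-ρ)^(r+1-w)) (w+1) := by
    intro w hw
    rw [mem_range] at hw
    simp only
    have h1 : r + 1 - w = (r - w) + 1 := by omega
    have h2 : r + 1 - (w + 1) = r - w := by omega
    have h3 : ((u + (w+1)).choose (u+1) : ℂ) = ((u+w).choose u : ℂ) + ((u+w).choose (u+1) : ℂ) := by
      have : (u + (w+1)).choose (u+1) = (u+w).choose u + (u+w).choose (u+1) := by
        have := Nat.choose_succ_succ (u + w) u
        rw [show u + (w+1) = (u+w)+1 by ring] at *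
        exact this
      exact_mod_cast congrArg (Nat.cast : ℕ → ℂ) this
    rw [h1, h2, h3]
    ring
  rw [mul_sum, ← sum_add_distrib, sum_congr rfl key, sum_range_sub']
  simp only [show u + (r+1) = u + r + 1 by ring]
  simp [Nat.choose_eq_zero_of_lt, pow_succ]

lemma key (ρ : ℂ) : ∀ (r u : ℕ),
    ∑ w ∈ range (r+1), (-1:ℂ)^w * ((u+r+1).choose w : ℂ) * ρ^w
      = ∑ w ∈ range (r+1), (-1:ℂ)^w * ((u+w).choose w : ℂ) * ρ^w * (1-ρ)^(r-w) := by
  intro r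
  induction r with
  | zero => intro u; simp
  | succ r ih =>
    intro u
    have hsymm : ∀ a b : ℕ, ((a+b).choose b : ℂ) = ((a+b).choose a : ℂ) := by
      intro a b; rw [Nat.choose_symm_add]
    have hRHS : ∑ w ∈ range (r+1+1), (-1:ℂ)^w * ((u+w).choose w : ℂ) * ρ^w * (1-ρ)^(r+1-w)
        = (∑ w ∈ range (r+1), (-1:ℂ)^w * ((u+w).choose u : ℂ) * ρ^w * (1-ρ)^(r-w))
          - (ρ * (∑ w ∈ range (r+1), (-1:ℂ)^w * ((u+w).choose u : ℂ) * ρ^w * (1-ρ)^(r-w)))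
          + (-1:ℂ)^(r+1) * ((u+r+1).choose u : ℂ) * ρ^(r+1) := by
      rw [sum_range_succ]
      have h1 : ∀ w ∈ range (r+1), (-1:ℂ)^w * ((u+w).choose w : ℂ) * ρ^w * (1-ρ)^(r+1-w)
          = ((-1:ℂ)^w * ((u+w).choose u : ℂ) * ρ^w * (1-ρ)^(r-w))
            - ρ * ((-1:ℂ)^w * ((u+w).choose u : ℂ) * ρ^w * (1-ρ)^(r-w)) := by
        intro w hw
        rw [mem_range] at hw
        rw [hsymm u w, show r + 1 - w = (r-w)+1 by omega]
        ring
      rw [sum_congr rfl h1, sum_sub_distrib, ← mul_sum]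
      rw [hsymm u (r+1), show u + (r+1) = u + r + 1 by ring]
      simp
    rw [hRHS]
    have htele := tele ρ r u
    -- B = P + Q'
    have hB : ∑ w ∈ range (r+1), (-1:ℂ)^w * (((u+1)+w).choose w : ℂ) * ρ^w * (1-ρ)^(r-w)
        = (∑ w ∈ range (r+1), (-1:ℂ)^w * ((u+w).choose u : ℂ) * ρ^w * (1-ρ)^(r-w))
          + (∑ w ∈ range (r+1), (-1:ℂ)^w * ((u+w).choose (u+1) : ℂ) * ρ^w * (1-ρ)^(r-w)) := by
      rw [← sum_add_distrib]
      refine sum_congr rfl fun w hw => ?_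
      have h3 : ((u+1)+w).choose w = (u+w).choose u + (u+w).choose (u+1) := by
        rw [show (u+1)+w = (u+w)+1 by ring]
        have := Nat.choose_succ_succ' (u+w) u
        rw [show (u+w)+1 = u+w+1 by ring] at this ⊢
        rw [show ((u+w+1).choose w) = ((u+w+1).choose (u+1)) from Nat.choose_symm_of_eq_add (by ring), this]
      rw [h3]
      push_cast
      ring
    -- now use ih at u+1 on hB's LHS
    have hih := ih (u+1)
    rw [show u+1+r+1 = u+r+2 by ring] at hih
    rw [sum_range_succ]
    rw [show u+(r+1)+1 = u+r+2 by ring]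
    rw [hih, hB]
    have hpascal : ((u+r+2).choose (r+1) : ℂ) = ((u+r+1).choose (u+1) : ℂ) + ((u+r+1).choose u : ℂ) := by
      have h4 : (u+r+2).choose (r+1) = (u+r+2).choose (u+1) := Nat.choose_symm_of_eq_add (by ring)
      have h5 : (u+r+2).choose (u+1) = (u+r+1).choose u + (u+r+1).choose (u+1) :=
        Nat.choose_succ_succ' (u+r+1) u
      rw [h4, h5]; push_cast; ring
    rw [hpascal]
    linear_combination htele

lemma stirlingB (m n : ℕ) :
    (n ! : ℂ) * stirling2 m n = ∑ v ∈ range (n+1), (-1:ℂ)^(n+v) * (n.choose v : ℂ) * (v:ℂ)^m := by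
  rw [stirling2]
  have hn : (n ! : ℂ) ≠ 0 := by exact_mod_cast Nat.factorial_ne_zero n
  have hm : (m ! : ℂ) ≠ 0 := by exact_mod_cast Nat.factorial_ne_zero m
  have hcoeff : (PowerSeries.coeff m) ((PowerSeries.exp ℂ - 1) ^ n)
      = ∑ v ∈ range (n+1), (-1:ℂ)^(n+v) * (n.choose v : ℂ) * (v:ℂ)^m / (m ! : ℂ) := by
    rw [sub_pow, map_sum]
    refine sum_congr rfl fun v hv => ?_
    rw [PowerSeries.exp_pow_eq_rescale_exp]
    have : ((-1 : PowerSeries ℂ) ^ (v + n) * PowerSeries.rescale (v:ℂ) (PowerSeries.exp ℂ) * 1 ^ (n - v) * ((n.choose v : ℕ) : PowerSeries ℂ))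
        = PowerSeries.C ((-1:ℂ)^(v+n) * (n.choose v : ℂ)) * PowerSeries.rescale (v:ℂ) (PowerSeries.exp ℂ) := by
      rw [← map_natCast (PowerSeries.C) (n.choose v), one_pow, mul_one,
          show ((-1 : PowerSeries ℂ)) = PowerSeries.C (-1) by simp, ← map_pow,
          mul_right_comm, ← map_mul]
    rw [this, PowerSeries.coeff_C_mul, PowerSeries.coeff_rescale, PowerSeries.coeff_exp]
    have hv' : v ≤ n := by rw [mem_range] at hv; omega
    rw [show v + n = n + v by ring] at *
    field_simp
    rw [map_div₀, map_one, map_natCast]; field_simp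
  rw [hcoeff, mul_sum, mul_sum]
  refine sum_congr rfl fun v hv => ?_
  field_simp

lemma triswap (f : ℕ → ℕ → ℂ) (N : ℕ) :
    ∑ v ∈ range (N+1), ∑ w ∈ range (N - v + 1), f v w
      = ∑ v ∈ range (N+1), ∑ w ∈ range (N - v + 1), f w v := by
  rw [← tri f N, ← tri (fun a b => f b a) N]
  refine sum_congr rfl fun j hj => ?_
  rw [← Finset.sum_range_reflect (fun i => f i (j - i)) (j+1)]
  refine sum_congr rfl fun v hv => ?_
  rw [mem_range] at hv
  simp only [Nat.add_sub_cancel]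
  rw [show j - (j - v) = v by omega]

theorem stmt6 (m : ℕ) (hm : 0 < m) (ρ : ℂ) :
    eulerianPoly m ρ =
      ∑ n ∈ Finset.Icc 1 m, ((n ! : ℂ) / (m.choose n : ℂ)) * bernsteinC m n ρ * stirling2 m n := by
  set f : ℕ → ℕ → ℂ := fun v w => (-1:ℂ)^v * ((m+1).choose v : ℂ) * (w:ℂ)^m * ρ^(v+w) with hfdef
  set g : ℕ → ℕ → ℂ := fun v w =>
    (v:ℂ)^m * ((-1:ℂ)^w * ((v+w).choose v : ℂ) * ρ^(v+w) * (1-ρ)^(m-(v+w))) with hgdef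
  have hL : eulerianPoly m ρ = ∑ j ∈ range (m+1), ∑ v ∈ range (j+1), f v (j - v) := by
    rw [eulerianPoly]
    refine sum_congr rfl fun j hj => ?_
    rw [eulerianNumber, sum_mul]
    refine sum_congr rfl fun v hv => ?_
    rw [mem_range] at hv
    have hv' : v ≤ j := by omega
    have h1 : ((j:ℂ) - v) = ((j - v : ℕ) : ℂ) := by
      push_cast [hv']; ring
    have h2 : v + (j - v) = j := by omega
    rw [hfdef]
    simp only
    rw [h1, h2]
  -- n = 0 term of RHS is zero
  have h0 : ((0 ! : ℂ) / (m.choose 0 : ℂ)) * bernsteinC m 0 ρ * stirling2 m 0 = 0 := by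
    have : stirling2 m 0 = 0 := by
      simp [stirling2, PowerSeries.coeff_one, hm.ne']
    rw [this, mul_zero]
  have hR : (∑ n ∈ Finset.Icc 1 m, ((n ! : ℂ) / (m.choose n : ℂ)) * bernsteinC m n ρ * stirling2 m n)
      = ∑ n ∈ range (m+1), ((n ! : ℂ) / (m.choose n : ℂ)) * bernsteinC m n ρ * stirling2 m n := by
    rw [range_eq_Ico, sum_eq_sum_Ico_succ_bot (Nat.succ_pos m), h0, zero_add,
        Nat.zero_add, Nat.succ_eq_add_one, Finset.Ico_add_one_right_eq_Icc]
  have hR2 : ∀ n ∈ range (m+1),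
      ((n ! : ℂ) / (m.choose n : ℂ)) * bernsteinC m n ρ * stirling2 m n
        = ∑ v ∈ range (n+1), g v (n - v) := by
    intro n hn
    rw [mem_range] at hn
    have hn' : n ≤ m := by omega
    have hC : ((m.choose n : ℕ) : ℂ) ≠ 0 := by
      exact_mod_cast (Nat.choose_pos hn').ne'
    rw [bernsteinC, if_pos hn']
    have hstep : ((n ! : ℂ) / (m.choose n : ℂ)) * ((m.choose n : ℂ) * ρ^n * (1-ρ)^(m-n)) * stirling2 m n
        = (ρ^n * (1-ρ)^(m-n)) * ((n ! : ℂ) * stirling2 m n) := by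
      field_simp
    rw [hstep, stirlingB, mul_sum]
    refine sum_congr rfl fun v hv => ?_
    rw [mem_range] at hv
    have hv' : v ≤ n := by omega
    have h2 : v + (n - v) = n := by omega
    have hsign : (-1:ℂ)^(n+v) = (-1:ℂ)^(n-v) := by
      rw [show n + v = (n - v) + 2*v by omega, pow_add, pow_mul]
      norm_num
    rw [hgdef]
    simp only
    rw [h2, hsign]
    ring
  rw [hL, tri f m, hR, sum_congr rfl hR2, tri g m, triswap f m]
  refine sum_congr rfl fun v hv => ?_
  symm
  rw [mem_range] at hv
  have hv' : v ≤ m := by omega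
  have hkey := (key ρ (m - v) v).symm
  rw [show v + (m - v) + 1 = m + 1 by omega] at hkey
  calc ∑ w ∈ range (m - v + 1), g v w
      = ∑ w ∈ range (m - v + 1), ((v:ℂ)^m * ρ^v) * ((-1:ℂ)^w * ((v+w).choose w : ℂ) * ρ^w * (1-ρ)^((m-v)-w)) := by
        refine sum_congr rfl fun w hw => ?_
        rw [hgdef]
        simp only
        rw [Nat.choose_symm_add, show m - (v + w) = m - v - w from (Nat.sub_sub m v w).symm, pow_add]
        ring
    _ = ((v:ℂ)^m * ρ^v) * ∑ w ∈ range (m - v + 1), ((-1:ℂ)^w * ((v+w).choose w : ℂ) * ρ^w * (1-ρ)^((m-v)-w)) := by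
        rw [mul_sum]
    _ = ((v:ℂ)^m * ρ^v) * ∑ w ∈ range (m - v + 1), (-1:ℂ)^w * ((m+1).choose w : ℂ) * ρ^w := by
        rw [hkey]
    _ = ∑ w ∈ range (m - v + 1), f w v := by
        rw [mul_sum]
        refine sum_congr rfl fun w hw => ?_
        rw [hfdef]
        simp only
        rw [pow_add]
        ring

-- sanity: no extra axioms
-- #print axioms stmt6
end

section
/- Let n be a positive integer and let ρ be a complex number with ρ ≠ 1. Then Σ_{j=1}^{n} (−1)^{j+1} · C(n,j) · j · (ρ−1)^{−j} · A_{j−1}(ρ) · ( ρ·Σ_{k=0}^{n−j} C(n−j,k) E_k − E_{n−j} ) = n·E_{n−1}, where E_k are the Euler numbers. -/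
open Finset Nat

/-- The Euler numbers `E_k`, defined by the generating function
`2/(e^t + 1) = Σ_{k≥0} E_k t^k/k!` (as a formal power series). -/
noncomputable def eulerNumber (k : ℕ) : ℂ :=
  (k ! : ℂ) * PowerSeries.coeff (R := ℂ) k ((2 : ℂ) • (PowerSeries.exp ℂ + 1)⁻¹)

section Aux0

open Polynomial

/- ### Part 0: alternating sums of polynomial values vanish -/

private lemma altsum : ∀ (M : ℕ) (P : Polynomial ℂ), P.degree < M →
    ∑ v ∈ Finset.range (M+1), (-1:ℂ)^v * (M.choose v) * P.eval (v:ℂ) = 0 := by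
  intro M
  induction M with
  | zero =>
    intro P h
    have : P = 0 := by
      rw [← Polynomial.degree_eq_bot]
      exact Nat.WithBot.lt_zero_iff.mp (by exact_mod_cast h)
    simp [this]
  | succ M ih =>
    intro P h
    by_cases hP : P = 0
    · simp [hP]
    have hnd : (X + C (1:ℂ)).natDegree ≠ 0 := by rw [natDegree_X_add_C]; exact one_ne_zero
    have hlc : P.leadingCoeff = (P.comp (X + C 1)).leadingCoeff := by
      rw [leadingCoeff_comp hnd, leadingCoeff_X_add_C, one_pow, mul_one]
    have hcomp : P.comp (X + C 1) ≠ 0 := fun hc => by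
      rw [hc, leadingCoeff_zero] at hlc
      exact hP (leadingCoeff_eq_zero.mp hlc)
    have hdP : P.degree ≤ (M:ℕ) := by
      rw [Polynomial.degree_eq_natDegree hP] at h ⊢
      exact_mod_cast Nat.lt_succ_iff.mp (by exact_mod_cast h)
    have hdc : (P.comp (X + C 1)).degree = P.degree := by
      rw [Polynomial.degree_eq_natDegree hP, Polynomial.degree_eq_natDegree hcomp,
        natDegree_comp, natDegree_X_add_C, mul_one]
    have hQ : (P - P.comp (X + C 1)).degree < M :=
      lt_of_lt_of_le (degree_sub_lt hdc.symm hP hlc) hdP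
    have key := ih _ hQ
    set g : ℕ → ℂ := fun v => (-1:ℂ)^v * (M.choose v) * P.eval (v:ℂ) with hg
    have keyexp : (∑ v ∈ Finset.range (M+1), g v)
        - ∑ v ∈ Finset.range (M+1), (-1:ℂ)^v * (M.choose v) * P.eval ((v:ℂ)+1) = 0 := by
      rw [← Finset.sum_sub_distrib, ← key]
      apply Finset.sum_congr rfl
      intro v _
      simp [g, eval_comp, mul_sub]
    have e1 := Finset.sum_range_succ' g (M+1)
    have e2 := Finset.sum_range_succ g (M+1)
    have hgtop : g (M+1) = 0 := by simp [g, Nat.choose_succ_self]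
    have h2 : (∑ v ∈ Finset.range (M+1), g (v+1)) + g 0 = ∑ v ∈ Finset.range (M+1), g v := by
      rw [← e1, e2, hgtop, add_zero]
    rw [Finset.sum_range_succ']
    have h1 : ∀ v ∈ Finset.range (M+1),
        (-1:ℂ)^(v+1) * ((M+1).choose (v+1)) * P.eval ((v+1:ℕ):ℂ)
        = -((-1:ℂ)^v * (M.choose v) * P.eval ((v:ℂ)+1)) + g (v+1) := by
      intro v _
      have hc : (((M+1).choose (v+1) : ℕ) : ℂ) = (M.choose v : ℂ) + (M.choose (v+1) : ℂ) := by
        exact_mod_cast congrArg (Nat.cast : ℕ → ℂ) (Nat.choose_succ_succ M v)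
      simp only [g, hc]
      push_cast
      ring
    rw [Finset.sum_congr rfl h1, Finset.sum_add_distrib, Finset.sum_neg_distrib]
    have hf0 : (-1:ℂ)^0 * ((M+1).choose 0 : ℂ) * P.eval ((0:ℕ):ℂ) = g 0 := by simp [g]
    rw [hf0]
    linear_combination keyexp + h2

private lemma eulerianNumber_eq_zero {N j : ℕ} (h : N < j) : eulerianNumber N j = 0 := by
  unfold eulerianNumber
  have hsub : Finset.range (N+2) ⊆ Finset.range (j+1) := by
    apply Finset.range_subset_range.mpr; omega
  rw [← Finset.sum_subset hsub (fun v hv hnv => by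
    have : N+1 < v := by simp at hv hnv; omega
    simp [Nat.choose_eq_zero_of_lt this])]
  have hdeg : ((C (j:ℂ) - X)^N).degree < ((N+1 : ℕ) : WithBot ℕ) := by
    have h1 : (C (j:ℂ) - X).degree = 1 := by
      have : C (j:ℂ) - X = -(X - C (j:ℂ)) := by ring
      rw [this, degree_neg, degree_X_sub_C]
    rw [degree_pow, h1]
    simp [Nat.cast_lt]
    exact_mod_cast WithBot.coe_lt_coe.mpr (by omega : N < N+1)
  have := altsum (N+1) ((C (j:ℂ) - X)^N) hdeg
  rw [← this]
  apply Finset.sum_congr rfl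
  intro v _
  simp

end Aux0

section Aux

/- ### Part 1: power series identities for the Eulerian polynomials -/

private noncomputable def fps (N : ℕ) : PowerSeries ℂ := PowerSeries.mk fun i => (i:ℂ)^N

private noncomputable def pA (N : ℕ) : Polynomial ℂ :=
  ∑ j ∈ Finset.range (N+1), Polynomial.C (eulerianNumber N j) * Polynomial.X ^ j

private lemma coeff_one_sub_X_pow (M v : ℕ) :
    PowerSeries.coeff (R := ℂ) v ((1 - PowerSeries.X)^M) = (-1:ℂ)^v * (M.choose v) := by
  induction M generalizing v with
  | zero =>
    cases v with
    | zero => simp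
    | succ k => simp [Nat.choose_eq_zero_of_lt]
  | succ M ih =>
    have : (1 - PowerSeries.X : PowerSeries ℂ)^(M+1)
        = (1 - PowerSeries.X)^M - (1 - PowerSeries.X)^M * PowerSeries.X := by ring
    rw [this, map_sub]
    cases v with
    | zero => simp [ih, PowerSeries.coeff_zero_mul_X]
    | succ k =>
      rw [PowerSeries.coeff_succ_mul_X, ih, ih]
      have hc : ((M+1).choose (k+1) : ℂ) = (M.choose k : ℂ) + (M.choose (k+1) : ℂ) := by
        exact_mod_cast congrArg (Nat.cast : ℕ → ℂ) (Nat.choose_succ_succ M k)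
      rw [hc]
      ring

private lemma coeff_pA (N j : ℕ) : (pA N).coeff j = eulerianNumber N j := by
  unfold pA
  rw [Polynomial.finset_sum_coeff]
  simp only [Polynomial.coeff_C_mul, Polynomial.coeff_X_pow, mul_ite, mul_one, mul_zero]
  rw [Finset.sum_ite_eq (Finset.range (N+1)) j]
  by_cases h : j ∈ Finset.range (N+1)
  · simp [h]
  · simp [h]
    exact (eulerianNumber_eq_zero (by simp at h; omega)).symm

private lemma key1 (N : ℕ) : (1 - PowerSeries.X)^(N+1) * fps N = (pA N : PowerSeries ℂ) := by
  ext j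
  rw [Polynomial.coeff_coe, coeff_pA, PowerSeries.coeff_mul,
    Finset.Nat.sum_antidiagonal_eq_sum_range_succ_mk]
  unfold eulerianNumber
  apply Finset.sum_congr rfl
  intro v hv
  rw [coeff_one_sub_X_pow]
  simp only [fps, PowerSeries.coeff_mk]
  have hvj : v ≤ j := by simp at hv; omega
  rw [Nat.cast_sub hvj]

private lemma key2 (N : ℕ) :
    PowerSeries.X * (∑ m ∈ Finset.range (N+1), ((N.choose m : ℂ)) • fps m)
      = fps N - (if N = 0 then 1 else 0) := by
  have hG : (∑ m ∈ Finset.range (N+1), ((N.choose m : ℂ)) • fps m)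
      = PowerSeries.mk (fun i => ((i:ℂ)+1)^N) := by
    ext i
    rw [map_sum, PowerSeries.coeff_mk]
    simp only [PowerSeries.coeff_smul, fps, PowerSeries.coeff_mk, smul_eq_mul]
    rw [add_pow]
    apply Finset.sum_congr rfl
    intro m _
    ring
  rw [hG]
  ext j
  cases j with
  | zero =>
    rw [PowerSeries.coeff_zero_eq_constantCoeff]
    simp only [map_sub, map_mul, PowerSeries.constantCoeff_X, zero_mul, map_sub]
    by_cases h : N = 0 <;> simp [h, fps]
  | succ k =>
    rw [map_sub, PowerSeries.coeff_succ_X_mul, PowerSeries.coeff_mk]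
    have : (PowerSeries.coeff (R := ℂ) (k+1)) (if N = 0 then (1:PowerSeries ℂ) else 0) = 0 := by
      by_cases h : N = 0 <;> simp [h, PowerSeries.coeff_one]
    rw [this, sub_zero]
    simp only [fps, PowerSeries.coeff_mk]
    push_cast
    ring

private lemma key3ps (N : ℕ) :
    PowerSeries.X * ∑ m ∈ Finset.range (N+1),
        ((N.choose m : ℂ)) • ((1 - PowerSeries.X)^(N-m) * (pA m : PowerSeries ℂ))
      = (pA N : PowerSeries ℂ) - (if N = 0 then 1 - PowerSeries.X else 0) := by
  have e1 : ∀ m ∈ Finset.range (N+1),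
      ((N.choose m : ℂ)) • ((1 - PowerSeries.X)^(N-m) * (pA m : PowerSeries ℂ))
        = ((N.choose m : ℂ)) • ((1 - PowerSeries.X)^(N+1) * fps m) := by
    intro m hm
    rw [← key1 m, ← mul_assoc, ← pow_add]
    congr 3
    simp at hm; omega
  rw [Finset.sum_congr rfl e1]
  have e2 : ∑ m ∈ Finset.range (N+1), ((N.choose m : ℂ)) • ((1 - PowerSeries.X)^(N+1) * fps m)
      = (1 - PowerSeries.X)^(N+1) * ∑ m ∈ Finset.range (N+1), ((N.choose m : ℂ)) • fps m := by
    rw [Finset.mul_sum]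
    exact Finset.sum_congr rfl fun m _ => (mul_smul_comm _ _ _).symm
  rw [e2, show PowerSeries.X * ((1 - PowerSeries.X)^(N+1)
      * ∑ m ∈ Finset.range (N+1), ((N.choose m : ℂ)) • fps m)
    = (1 - PowerSeries.X)^(N+1) * (PowerSeries.X
      * ∑ m ∈ Finset.range (N+1), ((N.choose m : ℂ)) • fps m) by ring, key2, mul_sub, key1]
  congr 1
  by_cases h : N = 0 <;> simp [h]

private lemma key3poly (N : ℕ) :
    (Polynomial.X : Polynomial ℂ) * ∑ m ∈ Finset.range (N+1),
        Polynomial.C ((N.choose m : ℂ)) * ((1 - Polynomial.X)^(N-m) * pA m)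
      = pA N - (if N = 0 then 1 - Polynomial.X else 0) := by
  apply Polynomial.coe_inj.mp
  have h := key3ps N
  simp only [PowerSeries.smul_eq_C_mul] at h
  simp only [← Polynomial.coeToPowerSeries.ringHom_apply, map_mul, map_sub, map_sum, map_pow,
    map_one, apply_ite (Polynomial.coeToPowerSeries.ringHom), map_zero]
  simp only [Polynomial.coeToPowerSeries.ringHom_apply, Polynomial.coe_X, Polynomial.coe_C]
  exact h

private lemma starstar (N : ℕ) (ρ : ℂ) :
    ρ * ∑ m ∈ Finset.range (N+1), (N.choose m : ℂ) * ((1-ρ)^(N-m) * eulerianPoly m ρ)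
      = eulerianPoly N ρ - (if N = 0 then 1 - ρ else 0) := by
  have h := congrArg (Polynomial.eval ρ) (key3poly N)
  simp only [Polynomial.eval_mul, Polynomial.eval_X, Polynomial.eval_finset_sum,
    Polynomial.eval_C, Polynomial.eval_sub, Polynomial.eval_pow, Polynomial.eval_one] at h
  have hpA : ∀ m, (pA m).eval ρ = eulerianPoly m ρ := by
    intro m
    unfold pA eulerianPoly
    simp [Polynomial.eval_finset_sum]
  simp only [hpA] at h
  have hif : Polynomial.eval ρ (if N = 0 then 1 - Polynomial.X else 0)
      = (if N = 0 then 1 - ρ else 0) := by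
    by_cases h0 : N = 0 <;> simp [h0]
  rw [hif] at h
  exact h

/- ### Part 2: the coefficients b_j and their recurrence -/

private noncomputable def bb (ρ : ℂ) (j : ℕ) : ℂ :=
  (-1:ℂ)^(j+1) * (j:ℂ) * (ρ-1)^(-(j:ℤ)) * eulerianPoly (j-1) ρ

private lemma bb_zero (ρ : ℂ) : bb ρ 0 = 0 := by simp [bb]

private lemma bb_succ (ρ : ℂ) (m : ℕ) :
    bb ρ (m+1) = (-1:ℂ)^m * ((m:ℂ)+1) * ((ρ-1)^(m+1))⁻¹ * eulerianPoly m ρ := by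
  unfold bb
  rw [Nat.add_sub_cancel]
  have hzp : (ρ-1) ^ (-(((m+1:ℕ)):ℤ)) = ((ρ-1)^(m+1))⁻¹ := by
    rw [zpow_neg, zpow_natCast]
  rw [hzp]
  have e1 : (-1:ℂ)^(m+1+1) = (-1:ℂ)^m := by rw [pow_succ, pow_succ]; ring
  rw [e1]
  push_cast
  ring

private lemma brec (ρ : ℂ) (hρ : ρ ≠ 1) (n : ℕ) :
    ρ * ∑ j ∈ Finset.range (n+1), (n.choose j : ℂ) * bb ρ j - bb ρ n
      = if n = 1 then 1 else 0 := by
  have hρ1 : ρ - 1 ≠ 0 := sub_ne_zero.mpr hρ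
  cases n with
  | zero => simp [bb_zero]
  | succ N =>
    set K : ℂ := ((N:ℂ)+1) * (-1)^N * ((ρ-1)^(N+1))⁻¹ with hK
    have hterm : ∀ m ∈ Finset.range (N+1),
        (((N+1).choose (m+1) : ℕ) : ℂ) * bb ρ (m+1)
          = K * ((N.choose m : ℂ) * ((1-ρ)^(N-m) * eulerianPoly m ρ)) := by
      intro m hm
      have hmN : m ≤ N := by simp at hm; omega
      have hCC : (((N+1).choose (m+1) : ℕ) : ℂ) * ((m:ℂ)+1) = ((N:ℂ)+1) * (N.choose m : ℂ) := by
        have h := Nat.add_one_mul_choose_eq N m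
        have h' : ((N+1) * (N.choose m) : ℕ) = (((N+1).choose (m+1)) * (m+1) : ℕ) := by
          simpa [Nat.succ_eq_add_one] using h
        have := congrArg (Nat.cast : ℕ → ℂ) h'
        push_cast at this
        linear_combination -this
      have e6 : ((-1:ℂ)^N) * (-1:ℂ)^(N-m) = (-1:ℂ)^m := by
        obtain ⟨d, hd⟩ := Nat.exists_eq_add_of_le hmN
        subst hd
        rw [Nat.add_sub_cancel_left, pow_add, mul_assoc, ← pow_add]
        rw [show d + d = 2*d by omega, pow_mul]
        norm_num
      have e3 : (1-ρ)^(N-m) = (-1:ℂ)^(N-m) * (ρ-1)^(N-m) := by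
        rw [show (1-ρ) = -(ρ-1) by ring, neg_pow]
      have e5 : ((ρ-1)^(N+1) : ℂ) = (ρ-1)^(m+1) * (ρ-1)^(N-m) := by
        rw [← pow_add]; congr 1; omega
      have h2 : ((ρ-1)^(N-m) : ℂ) ≠ 0 := pow_ne_zero _ hρ1
      have h1 : ((ρ-1)^(m+1) : ℂ) ≠ 0 := pow_ne_zero _ hρ1
      rw [bb_succ]
      calc (((N+1).choose (m+1) : ℕ) : ℂ)
            * ((-1:ℂ)^m * ((m:ℂ)+1) * ((ρ-1)^(m+1))⁻¹ * eulerianPoly m ρ)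
          = ((((N+1).choose (m+1) : ℕ) : ℂ) * ((m:ℂ)+1))
            * ((-1:ℂ)^m * ((ρ-1)^(m+1))⁻¹ * eulerianPoly m ρ) := by ring
        _ = (((N:ℂ)+1) * (N.choose m : ℂ))
            * (((-1:ℂ)^N * (-1:ℂ)^(N-m)) * ((ρ-1)^(m+1))⁻¹ * eulerianPoly m ρ) := by
            rw [hCC, e6]
        _ = K * ((N.choose m : ℂ) * ((1-ρ)^(N-m) * eulerianPoly m ρ)) := by
            rw [hK, e3, e5, mul_inv]
            field_simp
    rw [Finset.sum_range_succ']
    simp only [bb_zero, mul_zero, add_zero]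
    rw [Finset.sum_congr rfl hterm, ← Finset.mul_sum]
    have hbs : bb ρ (N+1) = K * eulerianPoly N ρ := by rw [bb_succ, hK]; ring
    rw [hbs, show ρ * (K * ∑ m ∈ Finset.range (N+1),
        (N.choose m : ℂ) * ((1-ρ)^(N-m) * eulerianPoly m ρ))
      = K * (ρ * ∑ m ∈ Finset.range (N+1),
        (N.choose m : ℂ) * ((1-ρ)^(N-m) * eulerianPoly m ρ)) by ring, starstar N ρ]
    by_cases h0 : N = 0
    · subst h0
      simp only [if_pos rfl, hK]
      have : ((ρ-1)^(0+1) : ℂ) ≠ 0 := pow_ne_zero _ hρ1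
      field_simp
      rw [if_pos trivial, if_pos trivial]; push_cast; ring
    · have h1 : ¬ (N + 1 = 1) := by omega
      simp only [if_neg h0, if_neg h1]
      ring

/- ### Part 3: Euler numbers -/

private noncomputable def Es : PowerSeries ℂ := (2 : ℂ) • (PowerSeries.exp ℂ + 1)⁻¹

private lemma coeff_Es (k : ℕ) : PowerSeries.coeff (R := ℂ) k Es = eulerNumber k / k ! := by
  rw [eulerNumber, Es, mul_div_cancel_left₀]
  exact_mod_cast Nat.factorial_ne_zero k

private lemma hEs : (PowerSeries.exp ℂ + 1) * Es = PowerSeries.C (R := ℂ) 2 := by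
  rw [Es, mul_smul_comm, PowerSeries.mul_inv_cancel]
  · ext k
    cases k <;> simp [PowerSeries.coeff_one, PowerSeries.coeff_C]
  · simp [PowerSeries.constantCoeff_exp]

private lemma coeff_exp' (v : ℕ) : PowerSeries.coeff (R := ℂ) v (PowerSeries.exp ℂ) = 1 / v ! := by
  rw [PowerSeries.coeff_exp]
  push_cast
  simp [map_div₀]

private lemma euler_sum (m : ℕ) :
    (∑ k ∈ Finset.range (m+1), (m.choose k : ℂ) * eulerNumber k) + eulerNumber m
      = if m = 0 then 2 else 0 := by
  have hco := congrArg (PowerSeries.coeff (R := ℂ) m) hEs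
  rw [add_mul, one_mul, map_add, PowerSeries.coeff_mul,
    Finset.Nat.sum_antidiagonal_eq_sum_range_succ_mk, PowerSeries.coeff_C] at hco
  simp only [coeff_exp', coeff_Es] at hco
  have hfac : (m ! : ℂ) ≠ 0 := by exact_mod_cast Nat.factorial_ne_zero m
  have hmul := congrArg (fun z => (m ! : ℂ) * z) hco
  simp only [mul_add, Finset.mul_sum] at hmul
  have hterm : ∀ v ∈ Finset.range (m+1),
      (m ! : ℂ) * (1 / v ! * (eulerNumber (m-v) / (m-v)!))
        = (m.choose (m-v) : ℂ) * eulerNumber (m-v) := by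
    intro v hv
    have hvm : v ≤ m := by simp at hv; omega
    have h1 : (m.choose (m-v)) * (v ! * (m-v)!) = m ! := by
      have h2 := Nat.choose_mul_factorial_mul_factorial (Nat.sub_le m v)
      rw [Nat.sub_sub_self hvm] at h2
      rw [← h2]; ring
    have h1c : (m ! : ℂ) = (m.choose (m-v) : ℂ) * ((v ! : ℂ) * ((m-v)! : ℂ)) := by
      exact_mod_cast h1.symm
    have hv2 : ((v)! : ℂ) ≠ 0 := by exact_mod_cast Nat.factorial_ne_zero v
    have hv3 : (((m-v))! : ℂ) ≠ 0 := by exact_mod_cast Nat.factorial_ne_zero (m-v)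
    rw [h1c]
    field_simp
  rw [Finset.sum_congr rfl hterm] at hmul
  have hrefl := Finset.sum_range_reflect (fun k => (m.choose k : ℂ) * eulerNumber k) (m+1)
  simp only [Nat.add_sub_cancel] at hrefl
  rw [hrefl] at hmul
  rw [mul_div_cancel₀ _ hfac] at hmul
  rw [hmul]
  by_cases h0 : m = 0 <;> simp [h0]

end Aux

theorem stmt11 (n : ℕ) (hn : 0 < n) (ρ : ℂ) (hρ : ρ ≠ 1) :
    ∑ j ∈ Finset.Icc 1 n,
        (-1 : ℂ) ^ (j + 1) * (n.choose j : ℂ) * (j : ℂ) * (ρ - 1) ^ (-(j : ℤ)) *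
          eulerianPoly (j - 1) ρ *
          (ρ * (∑ k ∈ Finset.range (n - j + 1), ((n - j).choose k : ℂ) * eulerNumber k) -
            eulerNumber (n - j)) =
      (n : ℂ) * eulerNumber (n - 1) := by
  have hρ1 : ρ - 1 ≠ 0 := sub_ne_zero.mpr hρ
  set c : ℕ → ℂ := fun m =>
    ρ * (∑ k ∈ Finset.range (m+1), (m.choose k : ℂ) * eulerNumber k) - eulerNumber m with hc
  set Bs : PowerSeries ℂ := PowerSeries.mk (fun j => bb ρ j / j !) with hBsdef
  set Cs : PowerSeries ℂ := PowerSeries.mk (fun m => c m / m !) with hCsdef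
  -- step 1 : (C ρ * exp - 1) * Bs = X
  have hQB : ((PowerSeries.C (R := ℂ) ρ) * PowerSeries.exp ℂ - 1) * Bs = PowerSeries.X := by
    ext N
    rw [sub_mul, one_mul, map_sub, mul_assoc, PowerSeries.coeff_C_mul, PowerSeries.coeff_mul,
      Finset.Nat.sum_antidiagonal_eq_sum_range_succ_mk, PowerSeries.coeff_X]
    simp only [coeff_exp', hBsdef, PowerSeries.coeff_mk]
    have hfac : ((N)! : ℂ) ≠ 0 := by exact_mod_cast Nat.factorial_ne_zero N
    have hterm : ∀ v ∈ Finset.range (N+1),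
        (1:ℂ) / v ! * (bb ρ (N-v) / ((N-v)! : ℂ))
          = ((N.choose (N-v) : ℂ) * bb ρ (N-v)) / (N ! : ℂ) := by
      intro v hv
      have hvm : v ≤ N := by simp at hv; omega
      have h1 : (N.choose (N-v)) * ((N-v)! * (v)!) = N ! := by
        have h2 := Nat.choose_mul_factorial_mul_factorial (Nat.sub_le N v)
        rw [Nat.sub_sub_self hvm] at h2
        rw [← h2]; ring
      have h1c : (N ! : ℂ) = (N.choose (N-v) : ℂ) * (((N-v)! : ℂ) * ((v)! : ℂ)) := by
        exact_mod_cast h1.symm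
      have hv2 : ((v)! : ℂ) ≠ 0 := by exact_mod_cast Nat.factorial_ne_zero v
      have hv3 : (((N-v))! : ℂ) ≠ 0 := by exact_mod_cast Nat.factorial_ne_zero (N-v)
      have hch : ((N.choose (N-v)) : ℂ) ≠ 0 := by
        exact_mod_cast (Nat.choose_pos (Nat.sub_le N v)).ne'
      have hch2 : ((N.choose v) : ℂ) ≠ 0 := by
        exact_mod_cast (Nat.choose_pos hvm).ne'
      rw [h1c]
      field_simp
    rw [Finset.sum_congr rfl hterm, ← Finset.sum_div]
    have hrefl := Finset.sum_range_reflect (fun k => (N.choose k : ℂ) * bb ρ k) (N+1)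
    simp only [Nat.add_sub_cancel] at hrefl
    rw [hrefl]
    have hb := brec ρ hρ N
    rw [show ρ * ((∑ j ∈ Finset.range (N+1), (N.choose j : ℂ) * bb ρ j) / (N ! : ℂ))
        - bb ρ N / (N ! : ℂ)
      = (ρ * (∑ j ∈ Finset.range (N+1), (N.choose j : ℂ) * bb ρ j) - bb ρ N) / (N ! : ℂ) by
        field_simp, hb]
    by_cases h1 : N = 1
    · subst h1; norm_num
    · simp [h1]
  -- step 2 : Cs = C(2ρ) - C(ρ+1) * Es
  have hCseq : Cs = PowerSeries.C (R := ℂ) (2*ρ) - (PowerSeries.C (R := ℂ) (ρ+1)) * Es := by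
    ext m
    rw [map_sub, PowerSeries.coeff_C_mul, coeff_Es, PowerSeries.coeff_C]
    simp only [hCsdef, PowerSeries.coeff_mk, hc]
    have hs := euler_sum m
    have he : ρ * (∑ k ∈ Finset.range (m+1), (m.choose k : ℂ) * eulerNumber k) - eulerNumber m
        = ρ * ((if m = 0 then (2:ℂ) else 0) - eulerNumber m) - eulerNumber m := by
      rw [← hs]; ring
    rw [he]
    have hfm : ((m)! : ℂ) ≠ 0 := by exact_mod_cast Nat.factorial_ne_zero m
    by_cases h0 : m = 0
    · subst h0; simp [Nat.factorial_zero]; ring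
    · rw [if_neg h0, if_neg h0]
      field_simp
      ring
  -- step 3 : (exp+1) * Cs = C 2 * (C ρ * exp - 1)
  have hexpCs : (PowerSeries.exp ℂ + 1) * Cs
      = PowerSeries.C (R := ℂ) 2 * ((PowerSeries.C (R := ℂ) ρ) * PowerSeries.exp ℂ - 1) := by
    rw [hCseq, mul_sub, show (PowerSeries.exp ℂ + 1) * ((PowerSeries.C (R := ℂ) (ρ+1)) * Es)
      = (PowerSeries.C (R := ℂ) (ρ+1)) * ((PowerSeries.exp ℂ + 1) * Es) by ring, hEs]
    have h2 : (PowerSeries.C (R := ℂ) (2*ρ)) = PowerSeries.C (R := ℂ) 2 * PowerSeries.C (R := ℂ) ρ := by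
      rw [← map_mul]
    have h3 : PowerSeries.C (R := ℂ) (ρ+1) * PowerSeries.C (R := ℂ) 2
        = PowerSeries.C (R := ℂ) 2 * PowerSeries.C (R := ℂ) ρ + PowerSeries.C (R := ℂ) 2 := by
      rw [← map_mul, ← map_mul, ← map_add]
      congr 1
      ring
    rw [h2, h3]
    ring
  -- step 4 : cancellation
  have hexp1ne : (PowerSeries.exp ℂ + 1 : PowerSeries ℂ) ≠ 0 := by
    intro h
    have := congrArg (PowerSeries.constantCoeff (R := ℂ)) h
    simp [PowerSeries.constantCoeff_exp] at this
  have hBC : Bs * Cs = PowerSeries.X * Es := by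
    apply mul_left_cancel₀ hexp1ne
    calc (PowerSeries.exp ℂ + 1) * (Bs * Cs)
        = Bs * ((PowerSeries.exp ℂ + 1) * Cs) := by ring
      _ = Bs * (PowerSeries.C (R := ℂ) 2 * ((PowerSeries.C (R := ℂ) ρ) * PowerSeries.exp ℂ - 1)) := by
          rw [hexpCs]
      _ = PowerSeries.C (R := ℂ) 2 * (((PowerSeries.C (R := ℂ) ρ) * PowerSeries.exp ℂ - 1) * Bs) := by ring
      _ = PowerSeries.C (R := ℂ) 2 * PowerSeries.X := by rw [hQB]
      _ = PowerSeries.X * ((PowerSeries.exp ℂ + 1) * Es) := by rw [hEs]; ring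
      _ = (PowerSeries.exp ℂ + 1) * (PowerSeries.X * Es) := by ring
  -- step 5 : extract coefficient n
  obtain ⟨m, rfl⟩ : ∃ m, n = m + 1 := ⟨n - 1, by omega⟩
  have hco := congrArg (PowerSeries.coeff (R := ℂ) (m+1)) hBC
  rw [PowerSeries.coeff_succ_X_mul, coeff_Es, PowerSeries.coeff_mul,
    Finset.Nat.sum_antidiagonal_eq_sum_range_succ_mk] at hco
  simp only [hBsdef, hCsdef, PowerSeries.coeff_mk] at hco
  have hmul := congrArg (fun z => (((m+1))! : ℂ) * z) hco
  simp only [Finset.mul_sum] at hmul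
  have hfac : (((m+1))! : ℂ) ≠ 0 := by exact_mod_cast Nat.factorial_ne_zero (m+1)
  have hterm : ∀ v ∈ Finset.range (m+1+1),
      (((m+1))! : ℂ) * (bb ρ v / (v)! * (c (m+1-v) / ((m+1-v))!))
        = ((m+1).choose v : ℂ) * bb ρ v * c (m+1-v) := by
    intro v hv
    have hvm : v ≤ m+1 := by simp at hv; omega
    have h1 : ((m+1).choose v) * ((v)! * ((m+1-v))!) = (m+1)! := by
      have h2 := Nat.choose_mul_factorial_mul_factorial hvm
      rw [← h2]; ring
    have h1c : (((m+1))! : ℂ) = ((m+1).choose v : ℂ) * (((v)! : ℂ) * (((m+1-v))! : ℂ)) := by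
      exact_mod_cast h1.symm
    have hv2 : ((v)! : ℂ) ≠ 0 := by exact_mod_cast Nat.factorial_ne_zero v
    have hv3 : (((m+1-v))! : ℂ) ≠ 0 := by exact_mod_cast Nat.factorial_ne_zero (m+1-v)
    rw [h1c]
    field_simp
  rw [Finset.sum_congr rfl hterm] at hmul
  -- rhs of hmul
  have hrhs : (((m+1))! : ℂ) * (eulerNumber m / (m)!) = ((m:ℂ)+1) * eulerNumber m := by
    rw [Nat.factorial_succ]
    have : ((m)! : ℂ) ≠ 0 := by exact_mod_cast Nat.factorial_ne_zero m
    push_cast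
    field_simp
  rw [hrhs] at hmul
  -- split off the v = 0 term
  have hins : Finset.range (m+1+1) = insert 0 (Finset.Icc 1 (m+1)) := by
    ext x; simp; omega
  rw [hins, Finset.sum_insert (by simp)] at hmul
  rw [bb_zero, mul_zero, zero_mul, zero_add] at hmul
  -- match the statement
  have hfin : ∀ j ∈ Finset.Icc 1 (m+1),
      (-1 : ℂ) ^ (j + 1) * ((m+1).choose j : ℂ) * (j : ℂ) * (ρ - 1) ^ (-(j : ℤ)) *
          eulerianPoly (j - 1) ρ *
          (ρ * (∑ k ∈ Finset.range (m+1 - j + 1), ((m+1 - j).choose k : ℂ) * eulerNumber k) -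
            eulerNumber (m+1 - j))
        = ((m+1).choose j : ℂ) * bb ρ j * c (m+1-j) := by
    intro j _
    simp only [bb, hc]
    ring
  rw [Finset.sum_congr rfl hfin]
  rw [hmul]
  push_cast
  simp
end
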